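/- For any even unimodular symmetric bilinear form q over ℤ of rank r, the form q ⊕ (−q) is isomorphic to the direct sum of r copies of the hyperbolic plane H. -/

import Mathlib

open Matrix

/-- The hyperbolic plane `H` over `ℤ`, with Gram matrix `[[0,1],[1,0]]`. -/
def hyperbolicPlane : Matrix (Fin 2) (Fin 2) ℤ := !![0, 1; 1, 0]

/-- The reindexed block diagonal sum of `r` hyperbolic planes is the block
matrix `[[0, I], [I, 0]]`. -/
lemma reindex_blockDiagonal_hyperbolic (r : ℕ) :
    (reindex
          (((finTwoEquiv.prodCongr (Equiv.refl (Fin r))).trans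
            (Equiv.boolProdEquivSum (Fin r))))
          (((finTwoEquiv.prodCongr (Equiv.refl (Fin r))).trans
            (Equiv.boolProdEquivSum (Fin r))))
          (blockDiagonal fun _ : Fin r => hyperbolicPlane))
      = fromBlocks (0 : Matrix (Fin r) (Fin r) ℤ) 1 1 0 := by
  ext i j
  rcases i with i | i <;> rcases j with j | j <;>
    simp [Matrix.blockDiagonal_apply, hyperbolicPlane, Matrix.one_apply,
      Equiv.boolProdEquivSum, finTwoEquiv]

/-- For any even unimodular symmetric bilinear form `q` over `ℤ` of rank `r`,
the form `q ⊕ (−q)` is isomorphic to the direct sum of `r` copies of the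
hyperbolic plane `H`. -/
theorem stmt_10 (r : ℕ) (A : Matrix (Fin r) (Fin r) ℤ)
    (hsymm : A.IsSymm) (hunimod : IsUnit A.det)
    (heven : ∀ x : Fin r → ℤ, Even (x ⬝ᵥ A.mulVec x)) :
    ∃ P : Matrix (Fin r ⊕ Fin r) (Fin r ⊕ Fin r) ℤ, IsUnit P.det ∧
      Pᵀ * fromBlocks A 0 0 (-A) * P =
        reindex
          (((finTwoEquiv.prodCongr (Equiv.refl (Fin r))).trans
            (Equiv.boolProdEquivSum (Fin r))))
          (((finTwoEquiv.prodCongr (Equiv.refl (Fin r))).trans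
            (Equiv.boolProdEquivSum (Fin r))))
          (blockDiagonal fun _ : Fin r => hyperbolicPlane) := by
  rw [reindex_blockDiagonal_hyperbolic]
  set G := A⁻¹ with hGdef
  have hAG : A * G = 1 := Matrix.mul_nonsing_inv A hunimod
  have hGA : G * A = 1 := Matrix.nonsing_inv_mul A hunimod
  have hGsymm : Gᵀ = G := by
    rw [hGdef, Matrix.transpose_nonsing_inv, hsymm.eq]
  have hGdiag : ∀ i, Even (G i i) := by
    intro i
    have h := heven (G.mulVec (Pi.single i 1))
    rw [Matrix.mulVec_mulVec, hAG, Matrix.one_mulVec,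
      dotProduct_single, mul_one, Matrix.mulVec_single] at h
    simpa using h
  set C : Matrix (Fin r) (Fin r) ℤ :=
    Matrix.of fun i j => if j < i then G i j else if i = j then G i i / 2 else 0 with hCdef
  have hCC : C + Cᵀ = G := by
    ext i j
    rcases lt_trichotomy i j with h | h | h
    · have hji : G j i = G i j := (congrFun (congrFun hGsymm j) i).symm
      simp [hCdef, Matrix.add_apply, h.ne, h.ne', not_lt.mpr h.le, h, hji]
    · subst h
      obtain ⟨k, hk⟩ := hGdiag i
      simp [hCdef, Matrix.add_apply]
      omega
    · simp [hCdef, Matrix.add_apply, h, h.ne, h.ne', not_lt.mpr h.le]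
  have key : (fromBlocks 1 (G - C) 1 (-C))ᵀ * fromBlocks A 0 0 (-A) *
      fromBlocks 1 (G - C) 1 (-C) = (fromBlocks 0 1 1 0 : Matrix (Fin r ⊕ Fin r) (Fin r ⊕ Fin r) ℤ) := by
    have e2 : G * (A * C) = C := by rw [← mul_assoc, hGA, one_mul]
    rw [Matrix.fromBlocks_transpose, Matrix.fromBlocks_multiply, Matrix.fromBlocks_multiply]
    simp only [Matrix.transpose_one, Matrix.transpose_sub, Matrix.transpose_neg, hGsymm,
      Matrix.mul_one, Matrix.one_mul, Matrix.zero_mul, Matrix.mul_zero, add_zero, zero_add,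
      Matrix.neg_mul, Matrix.mul_neg, neg_neg,
      Matrix.mul_sub, Matrix.sub_mul, mul_assoc, hAG, hGA, e2]
    rw [Matrix.fromBlocks_inj]
    refine ⟨by abel, by abel, by abel, ?_⟩
    rw [← hCC]
    abel
  refine ⟨fromBlocks 1 (G - C) 1 (-C), ?_, key⟩
  have hdet := congrArg Matrix.det key
  simp only [Matrix.det_mul, Matrix.det_transpose] at hdet
  have hTunit : IsUnit (fromBlocks 0 1 1 0 : Matrix (Fin r ⊕ Fin r) (Fin r ⊕ Fin r) ℤ).det := by
    have hT2 : (fromBlocks 0 1 1 0 : Matrix (Fin r ⊕ Fin r) (Fin r ⊕ Fin r) ℤ) *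
        fromBlocks 0 1 1 0 = 1 := by
      rw [Matrix.fromBlocks_multiply]
      simp [← Matrix.fromBlocks_one]
    have := congrArg Matrix.det hT2
    rw [Matrix.det_mul, Matrix.det_one] at this
    exact IsUnit.of_mul_eq_one _ this
  exact isUnit_of_dvd_unit ⟨(fromBlocks A 0 0 (-A)).det * (fromBlocks 1 (G - C) 1 (-C)).det,
    by rw [← hdet]; ring⟩ hTunit
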